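/- The cumulative density function of the area ratio is properly normalized at the endpoints: as c → 0 from the right, c − (3c − 1/2)·ln c + (1 − 4c)^{3/2}·artanh(√(1 − 4c)) tends to 0, and at c = 1 the expression c − (3c − 1/2)·ln c + (4c − 1)^{3/2}·(arctan(√(4c − 1)) − π/3) equals 1. -/

import Mathlib

open Real Filter

/-- The inverse hyperbolic tangent, `artanh a = (1/2)·ln((1+a)/(1−a))`. -/
noncomputable def artanh (a : ℝ) : ℝ := (1 / 2) * Real.log ((1 + a) / (1 - a))

lemma left_limit :
    Tendsto (fun c : ℝ => c - (3 * c - 1 / 2) * Real.log c +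
        (1 - 4 * c) ^ ((3 : ℝ) / 2) * _root_.artanh (Real.sqrt (1 - 4 * c)))
      (nhdsWithin 0 (Set.Ioi 0)) (nhds 0) := by
  set g : ℝ → ℝ := fun c =>
    c - 3 * (Real.log c * c)
      + (Real.log c * c) * (2 * ((1 + Real.sqrt (1 - 4*c) + Real.sqrt (1 - 4*c) ^ 2) /
          (1 + Real.sqrt (1 - 4*c))))
      + Real.sqrt (1 - 4*c) ^ 3 * Real.log ((1 + Real.sqrt (1 - 4*c)) / 2) with hg
  have hxlog : Tendsto (fun c : ℝ => Real.log c * c) (nhdsWithin 0 (Set.Ioi 0)) (nhds 0) := by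
    have h := tendsto_log_mul_rpow_nhdsGT_zero (r := 1) zero_lt_one
    simpa using h
  have hc0 : Tendsto (fun c : ℝ => c) (nhdsWithin 0 (Set.Ioi 0)) (nhds 0) :=
    tendsto_id.mono_left nhdsWithin_le_nhds
  have hs : Tendsto (fun c : ℝ => Real.sqrt (1 - 4*c)) (nhdsWithin 0 (Set.Ioi 0)) (nhds 1) := by
    have hcont : Continuous fun c : ℝ => Real.sqrt (1 - 4*c) := by continuity
    have h := hcont.tendsto 0
    simp only [mul_zero, sub_zero, Real.sqrt_one] at h
    exact h.mono_left nhdsWithin_le_nhds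
  have hG : Tendsto g (nhdsWithin 0 (Set.Ioi 0)) (nhds 0) := by
    have t2 : Tendsto (fun c : ℝ => 3 * (Real.log c * c)) (nhdsWithin 0 (Set.Ioi 0)) (nhds 0) := by
      simpa using tendsto_const_nhds.mul hxlog
    have t3 : Tendsto (fun c : ℝ =>
        (Real.log c * c) * (2 * ((1 + Real.sqrt (1 - 4*c) + Real.sqrt (1 - 4*c) ^ 2) /
          (1 + Real.sqrt (1 - 4*c))))) (nhdsWithin 0 (Set.Ioi 0)) (nhds 0) := by
      have hfrac : Tendsto (fun c : ℝ =>
          2 * ((1 + Real.sqrt (1 - 4*c) + Real.sqrt (1 - 4*c) ^ 2) /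
            (1 + Real.sqrt (1 - 4*c)))) (nhdsWithin 0 (Set.Ioi 0)) (nhds 3) := by
        have hca : ContinuousAt (fun c : ℝ =>
            2 * ((1 + Real.sqrt (1 - 4*c) + Real.sqrt (1 - 4*c) ^ 2) /
              (1 + Real.sqrt (1 - 4*c)))) 0 := by
          apply ContinuousAt.mul continuousAt_const
          apply ContinuousAt.div
          · exact (by continuity : Continuous fun c : ℝ =>
              1 + Real.sqrt (1 - 4*c) + Real.sqrt (1 - 4*c) ^ 2).continuousAt
          · exact (by continuity : Continuous fun c : ℝ =>
              1 + Real.sqrt (1 - 4*c)).continuousAt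
          · norm_num [Real.sqrt_one]
        have h := hca.tendsto.mono_left (nhdsWithin_le_nhds (s := Set.Ioi (0:ℝ)))
        norm_num [Real.sqrt_one] at h
        exact h
      simpa using hxlog.mul hfrac
    have t4 : Tendsto (fun c : ℝ =>
        Real.sqrt (1 - 4*c) ^ 3 * Real.log ((1 + Real.sqrt (1 - 4*c)) / 2))
        (nhdsWithin 0 (Set.Ioi 0)) (nhds 0) := by
      have hlog : Tendsto (fun c : ℝ => Real.log ((1 + Real.sqrt (1 - 4*c)) / 2))
          (nhdsWithin 0 (Set.Ioi 0)) (nhds 0) := by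
        have hca : ContinuousAt (fun c : ℝ =>
            Real.log ((1 + Real.sqrt (1 - 4*c)) / 2)) 0 := by
          apply ContinuousAt.log
          · exact (by continuity : Continuous fun c : ℝ =>
              (1 + Real.sqrt (1 - 4*c)) / 2).continuousAt
          · norm_num [Real.sqrt_one]
        have h := hca.tendsto.mono_left (nhdsWithin_le_nhds (s := Set.Ioi (0:ℝ)))
        norm_num [Real.sqrt_one] at h
        exact h
      simpa using (hs.pow 3).mul hlog
    have := ((hc0.sub t2).add t3).add t4
    simpa [hg] using this
  have heq : (fun c : ℝ => c - (3 * c - 1 / 2) * Real.log c +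
      (1 - 4 * c) ^ ((3 : ℝ) / 2) * _root_.artanh (Real.sqrt (1 - 4 * c))) =ᶠ[nhdsWithin 0 (Set.Ioi 0)] g := by
    filter_upwards [Ioo_mem_nhdsGT_of_mem (by norm_num : (0:ℝ) ∈ Set.Ico 0 (1/4))] with c hc
    obtain ⟨hc0', hc4⟩ := hc
    set s := Real.sqrt (1 - 4*c) with hsdef
    have h14 : (0:ℝ) < 1 - 4*c := by linarith
    have hs0 : 0 < s := Real.sqrt_pos.mpr h14
    have hs2 : s ^ 2 = 1 - 4*c := Real.sq_sqrt h14.le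
    have hs1 : s < 1 := by nlinarith
    have h1m : (0:ℝ) < 1 - s := by linarith
    have h1p : (0:ℝ) < 1 + s := by linarith
    have hpow : (1 - 4*c) ^ ((3:ℝ)/2) = s ^ 3 := by
      rw [show ((3:ℝ)/2) = (1/(2:ℝ)) * (3:ℕ) by norm_num, Real.rpow_mul h14.le,
        Real.rpow_natCast, ← Real.sqrt_eq_rpow]
    have hlog1m : Real.log (1 - s) = 2 * Real.log 2 + Real.log c - Real.log (1 + s) := by
      have h4c : 1 - s = 4 * c / (1 + s) := by
        field_simp
        nlinarith
      rw [h4c, Real.log_div (by positivity) (by positivity),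
        show (4:ℝ)*c = 2^2 * c by ring, Real.log_mul (by norm_num) hc0'.ne',
        Real.log_pow]
      push_cast; ring
    have hart : _root_.artanh s = Real.log (1 + s) - Real.log 2 - (1/2) * Real.log c := by
      rw [_root_.artanh, Real.log_div (by positivity) h1m.ne', hlog1m]; ring
    have hlogd : Real.log ((1 + s) / 2) = Real.log (1 + s) - Real.log 2 :=
      Real.log_div (by positivity) (by norm_num)
    have key : (1 - s^3) * (1 + s) = 4 * c * (1 + s + s^2) := by nlinarith
    simp only [hg]
    rw [hpow, hart, hlogd, ← hsdef]
    field_simp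
    linear_combination Real.log c * key
  exact hG.congr' heq.symm

/-- The CDF of the area ratio is properly normalized: the left branch tends to `0`
as `c → 0⁺`, and the right branch equals `1` at `c = 1`. -/
theorem cdf_normalized :
    Tendsto (fun c : ℝ => c - (3 * c - 1 / 2) * Real.log c +
        (1 - 4 * c) ^ ((3 : ℝ) / 2) * _root_.artanh (Real.sqrt (1 - 4 * c)))
      (nhdsWithin 0 (Set.Ioi 0)) (nhds 0) ∧
    (1 : ℝ) - (3 * 1 - 1 / 2) * Real.log 1 +
        (4 * 1 - 1) ^ ((3 : ℝ) / 2) * (Real.arctan (Real.sqrt (4 * 1 - 1)) - π / 3) = 1 := by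
  constructor
  · exact left_limit
  · have h3 : Real.arctan (Real.sqrt 3) = π / 3 := by
      rw [← Real.tan_pi_div_three, Real.arctan_tan] <;> linarith [Real.pi_pos]
    norm_num [h3]
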